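/- Let X be a second-countable T₁ topological space, let p : X̃ → X be a generalized universal covering, and assume the set N of points of X at which X is not semi-locally simply connected is at most countable. Then the action of the deck transformation group Γ ≅ π₁(X, x₀) on X̃ admits a Borel-measurable fundamental domain, i.e. a Borel set F ⊆ X̃ meeting each Γ-orbit in exactly one point. -/

import Mathlib

open Set

attribute [local instance] Path.Homotopic.setoid


/-- `X` is semi-locally simply connected at `x`: some neighbourhood `U` of `x` is such that
every loop at `x` contained in `U` is null-homotopic in `X`. -/
def SemiLocallySimplyConnectedAt (X : Type*) [TopologicalSpace X] (x : X) : Prop :=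
  ∃ U ∈ nhds x, ∀ γ : Path x x, Set.range γ ⊆ U → γ.Homotopic (Path.refl x)

def GenCovLift {X Xt : Type} [TopologicalSpace X] [TopologicalSpace Xt] (p : Xt → X) : Prop :=
  ∀ (Y : Type) [TopologicalSpace Y] [PathConnectedSpace Y]
      [LocallyPathConnectedSpace Y] (y : Y) (f : Y → X) (hf : Continuous f),
      (∀ γ : Path y y, (γ.map hf).Homotopic (Path.refl (f y))) →
      ∀ xt : Xt, p xt = f y →
        ∃! g : Y → Xt, Continuous g ∧ g y = xt ∧ p ∘ g = f

section Aux
variable {X Xt : Type} [TopologicalSpace X] [TopologicalSpace Xt] {p : Xt → X}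

theorem mapped_loops_trivial {Y : Type} [TopologicalSpace Y] [SimplyConnectedSpace Y]
    (y : Y) (f : Y → X) (hf : Continuous f) (γ : Path y y) :
    (γ.map hf).Homotopic (Path.refl (f y)) := by
  have h : γ.Homotopic (Path.refl y) := SimplyConnectedSpace.paths_homotopic γ (Path.refl y)
  have h2 := h.map ⟨f, hf⟩
  have e : (Path.refl y).map hf = Path.refl (f y) := by ext t; rfl
  rw [e] at h2; exact h2

theorem lift_unique {Y : Type} [TopologicalSpace Y] [PathConnectedSpace Y]
    [LocallyPathConnectedSpace Y] [SimplyConnectedSpace Y]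
    (hlift : GenCovLift p) {f : Y → X} (hf : Continuous f)
    {g₁ g₂ : Y → Xt} (h₁ : Continuous g₁) (h₂ : Continuous g₂)
    (hpg₁ : p ∘ g₁ = f) (hpg₂ : p ∘ g₂ = f) {y : Y} (he : g₁ y = g₂ y) : g₁ = g₂ := by
  obtain ⟨g, _, hu⟩ := hlift Y y f hf (fun γ => mapped_loops_trivial y f hf γ) (g₁ y)
    (congrFun hpg₁ y)
  rw [hu g₁ ⟨h₁, rfl, hpg₁⟩, hu g₂ ⟨h₂, he.symm, hpg₂⟩]

noncomputable def clampI : ℝ → unitInterval := Set.projIcc 0 1 zero_le_one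
theorem continuous_clampI : Continuous clampI := continuous_projIcc
@[simp] theorem clampI_zero : clampI 0 = 0 := by simp [clampI, Set.projIcc]
@[simp] theorem clampI_one : clampI 1 = 1 := by simp [clampI, Set.projIcc]
@[simp] theorem clampI_coe (t : unitInterval) : clampI (t : ℝ) = t := by
  simp [clampI, Set.projIcc_val]

/-- `Xt` is T1. -/
theorem cov_t1 [T1Space X] (hp : Continuous p) (hlift : GenCovLift p) : T1Space Xt := by
  constructor
  intro a
  rw [← isOpen_compl_iff, isOpen_iff_mem_nhds]
  intro b hb
  by_cases hpab : p b = p a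
  · by_contra hcon
    have hall : ∀ V : Set Xt, IsOpen V → b ∈ V → a ∈ V := by
      intro V hV hbV
      by_contra haV
      exact hcon (Filter.mem_of_superset (hV.mem_nhds hbV) (fun x hx (hxa : x = a) => haV (hxa ▸ hx)))
    set g : ℝ → Xt := fun t => if t = 1 then b else a with hg
    have hgc : Continuous g := by
      rw [continuous_def]
      intro V hV
      by_cases hbV : b ∈ V
      · have haV : a ∈ V := hall V hV hbV
        have : g ⁻¹' V = univ := by
          ext t; simp only [mem_preimage, mem_univ, iff_true, hg]
          split <;> assumption
        rw [this]; exact isOpen_univ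
      · by_cases haV : a ∈ V
        · have : g ⁻¹' V = {t : ℝ | t ≠ 1} := by
            ext t
            simp only [mem_preimage, mem_setOf_eq, hg]
            constructor
            · intro h ht1; rw [if_pos ht1] at h; exact hbV h
            · intro h; rw [if_neg h]; exact haV
          rw [this]
          exact isOpen_compl_singleton
        · have : g ⁻¹' V = ∅ := by
            ext t; simp only [mem_preimage, mem_empty_iff_false, iff_false, hg]
            intro h; split at h
            · exact hbV h
            · exact haV h
          rw [this]; exact isOpen_empty
    have hpg : p ∘ g = fun _ => p a := by
      funext t; simp only [Function.comp, hg]; split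
      · exact hpab
      · rfl
    have h0 : g 0 = a := by simp [hg]
    have := lift_unique (Xt := Xt) hlift (f := fun _ : ℝ => p a) continuous_const hgc
      continuous_const hpg (by funext t; rfl) (y := 0) (by rw [h0])
    have h1 : g 1 = a := by rw [this]
    simp only [hg, if_pos rfl] at h1
    exact hb h1
  · obtain ⟨U, hU, hbU, haU⟩ := t1Space_iff_exists_open.mp ‹T1Space X› hpab
    exact Filter.mem_of_superset ((hU.preimage hp).mem_nhds hbU)
      (fun x hx (hxa : x = a) => haU (hxa ▸ hx))


/-- Path lifting with prescribed starting point. -/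
theorem path_lift (hlift : GenCovLift p) {z₀ z₁ : X} (L : Path z₀ z₁)
    (a : Xt) (ha : p a = z₀) :
    ∃ b : Xt, p b = z₁ ∧ ∃ β : Path a b, ∀ t, p (β t) = L t := by
  set f : ℝ → X := fun r => L (clampI r) with hf
  have hfc : Continuous f := L.continuous.comp continuous_clampI
  have hf0 : p a = f 0 := by simp [hf, ha]
  obtain ⟨g, ⟨hgc, hg0, hpg⟩, -⟩ := hlift ℝ 0 f hfc
    (fun γ => mapped_loops_trivial 0 f hfc γ) a hf0
  have hval : ∀ t : unitInterval, p (g (t : ℝ)) = L t := by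
    intro t
    have := congrFun hpg (t : ℝ)
    simpa [hf] using this
  refine ⟨g 1, by simpa using hval 1, ⟨⟨fun t => g (t : ℝ),
    hgc.comp continuous_subtype_val⟩, ?_, ?_⟩, ?_⟩
  · simpa using hg0
  · rfl
  · intro t; exact hval t

/-- Key injectivity: if loops at `p a` inside `U` are null-homotopic, then two points of the
fibre over `p a` joined inside `p ⁻¹' U` coincide. -/
theorem key_inj (hp : Continuous p) (hlift : GenCovLift p) {U : Set X} {a b : Xt}
    (hkill : ∀ γ : Path (p a) (p a), Set.range ⇑γ ⊆ U → γ.Homotopic (Path.refl (p a)))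
    (hb : p b = p a) (hab : JoinedIn (p ⁻¹' U) a b) : b = a := by
  obtain ⟨β, hβ⟩ := hab
  set L0 : Path (p a) (p b) := β.map hp with hL0
  set L : Path (p a) (p a) := L0.cast rfl hb.symm with hL
  have hLcoe : ∀ t, L t = p (β t) := fun t => rfl
  have hLrange : Set.range ⇑L ⊆ U := by
    rw [Set.range_subset_iff]
    intro t; rw [hLcoe t]; exact hβ t
  obtain ⟨K⟩ := hkill L hLrange
  have K0s : ∀ s : unitInterval, K (0, s) = L s := fun s => K.apply_zero s
  have K1s : ∀ s : unitInterval, K (1, s) = p a := fun s => by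
    have := K.apply_one s; simpa using this
  have Ks0 : ∀ t : unitInterval, K (t, 0) = p a := fun t => K.source t
  have Ks1 : ∀ t : unitInterval, K (t, 1) = p a := fun t => K.target t
  set Hf : ℝ × ℝ → X := fun w => K (clampI w.1, clampI w.2) with hHf
  have hHfc : Continuous Hf := K.continuous.comp
    ((continuous_clampI.comp continuous_fst).prodMk (continuous_clampI.comp continuous_snd))
  have hpa : p a = Hf (0, 0) := by
    show p a = K (clampI 0, clampI 0)
    rw [clampI_zero, K0s 0]
    simp
  obtain ⟨g, ⟨hgc, hg0, hpg⟩, -⟩ := hlift (ℝ × ℝ) (0, 0) Hf hHfc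
    (fun γ => mapped_loops_trivial _ Hf hHfc γ) a hpa
  have hpg' : ∀ w, p (g w) = Hf w := fun w => congrFun hpg w
  set u1 : ℝ → Xt := fun t => g (t, 0) with hu1
  set u2 : ℝ → Xt := fun s => g (1, s) with hu2
  set u3 : ℝ → Xt := fun t => g (t, 1) with hu3
  set v : ℝ → Xt := fun s => g (0, s) with hv
  have hu1c : Continuous u1 := hgc.comp (continuous_id.prodMk continuous_const)
  have hu2c : Continuous u2 := hgc.comp (continuous_const.prodMk continuous_id)
  have hu3c : Continuous u3 := hgc.comp (continuous_id.prodMk continuous_const)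
  have hvc : Continuous v := hgc.comp (continuous_const.prodMk continuous_id)
  have e1 : u1 1 = a := by
    have h := lift_unique (Xt := Xt) hlift (f := fun _ : ℝ => p a) continuous_const
      hu1c continuous_const
      (by funext t; show p (g (t, 0)) = p a; rw [hpg' (t, 0)]; show K (clampI t, clampI 0) = p a
          rw [clampI_zero]; exact Ks0 _)
      (by funext t; rfl) (y := 0) (by show g (0, 0) = a; exact hg0)
    exact congrFun h 1
  have e2 : u2 1 = a := by
    have h := lift_unique (Xt := Xt) hlift (f := fun _ : ℝ => p a) continuous_const
      hu2c continuous_const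
      (by funext s; show p (g (1, s)) = p a; rw [hpg' (1, s)]; show K (clampI 1, clampI s) = p a
          rw [clampI_one]; exact K1s _)
      (by funext t; rfl) (y := 0) (by show g (1, 0) = a; exact e1)
    exact congrFun h 1
  have e3 : u3 0 = a := by
    have h := lift_unique (Xt := Xt) hlift (f := fun _ : ℝ => p a) continuous_const
      hu3c continuous_const
      (by funext t; show p (g (t, 1)) = p a; rw [hpg' (t, 1)]; show K (clampI t, clampI 1) = p a
          rw [clampI_one]; exact Ks1 _)
      (by funext t; rfl) (y := 1) (by show g (1, 1) = a; exact e2)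
    exact congrFun h 0
  have e4 : v = fun s : ℝ => β (clampI s) := by
    refine lift_unique (Xt := Xt) hlift (f := fun s : ℝ => L (clampI s))
      (L.continuous.comp continuous_clampI) hvc
      (β.continuous.comp continuous_clampI)
      (by funext s; show p (g (0, s)) = L (clampI s); rw [hpg' (0, s)]
          show K (clampI 0, clampI s) = L (clampI s); rw [clampI_zero]; exact K0s _)
      (by funext s; exact (hLcoe (clampI s)).symm) (y := 0) ?_
    show g (0, 0) = β (clampI 0)
    rw [clampI_zero, hg0]
    exact (β.source).symm
  have hv1 : v 1 = b := by
    rw [e4]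
    show β (clampI 1) = b
    rw [clampI_one]
    exact β.target
  have hv1' : v 1 = a := e3
  rw [hv1'] at hv1; exact hv1.symm

open CategoryTheory in
/-- Null-homotopy of loops inside `U` propagates along path components of `U`. -/
theorem kills_of_joined {U : Set X} {z z' : X}
    (hkill : ∀ γ : Path z z, Set.range ⇑γ ⊆ U → γ.Homotopic (Path.refl z))
    (hj : JoinedIn U z z') :
    ∀ γ : Path z' z', Set.range ⇑γ ⊆ U → γ.Homotopic (Path.refl z') := by
  intro γ hγ
  set q : Path z z' := hj.somePath with hqdef
  have hqm : ∀ t, q t ∈ U := hj.somePath_mem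
  have hqr : Set.range ⇑q ⊆ U := Set.range_subset_iff.mpr hqm
  set M : Path z z := (q.trans γ).trans q.symm with hM
  have hMr : Set.range ⇑M ⊆ U := by
    rw [hM, Path.trans_range, Path.trans_range, Path.symm_range]
    exact Set.union_subset (Set.union_subset hqr hγ) hqr
  have hMh : M.Homotopic (Path.refl z) := hkill M hMr
  -- move to the fundamental groupoid
  let za : FundamentalGroupoid X := ⟨z⟩
  let zb : FundamentalGroupoid X := ⟨z'⟩
  let Q : za ⟶ zb := ⟦q⟧
  let Q' : zb ⟶ za := ⟦q.symm⟧
  let G : zb ⟶ zb := ⟦γ⟧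
  have hcomp : ∀ {x y w : X} (r : Path x y) (r' : Path y w),
      (⟦r⟧ ≫ ⟦r'⟧ : (⟨x⟩ : FundamentalGroupoid X) ⟶ ⟨w⟩) = ⟦r.trans r'⟧ := by
    intro x y w r r'
    exact rfl
  have hQQ' : Q ≫ Q' = 𝟙 za := by
    show (⟦q⟧ ≫ ⟦q.symm⟧ : za ⟶ za) = 𝟙 za
    rw [hcomp q q.symm, FundamentalGroupoid.id_eq_path_refl]
    exact Quotient.sound ⟨(Path.Homotopy.reflTransSymm q).symm⟩
  have hQ'Q : Q' ≫ Q = 𝟙 zb := by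
    show (⟦q.symm⟧ ≫ ⟦q⟧ : zb ⟶ zb) = 𝟙 zb
    rw [hcomp q.symm q, FundamentalGroupoid.id_eq_path_refl]
    exact Quotient.sound ⟨(Path.Homotopy.reflSymmTrans q).symm⟩
  have hMg : (Q ≫ G) ≫ Q' = 𝟙 za := by
    show ((⟦q⟧ ≫ ⟦γ⟧) ≫ ⟦q.symm⟧ : za ⟶ za) = 𝟙 za
    rw [hcomp q γ, hcomp (q.trans γ) q.symm, FundamentalGroupoid.id_eq_path_refl]
    exact Quotient.sound hMh
  have h2 : Q ≫ G = Q := by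
    have h := congrArg (fun m => m ≫ Q) hMg
    simpa only [Category.assoc, hQ'Q, Category.comp_id, Category.id_comp] using h
  have h3 : G = 𝟙 zb := by
    have h := congrArg (fun m => Q' ≫ m) h2
    simpa only [← Category.assoc, hQ'Q, Category.id_comp] using h
  have : (⟦γ⟧ : Path.Homotopic.Quotient z' z') = ⟦Path.refl z'⟧ := by
    have := h3.trans (FundamentalGroupoid.id_eq_path_refl zb)
    exact this
  exact Quotient.exact this

/-- Project a `JoinedIn` from the cover down to the base. -/
theorem joined_proj (hp : Continuous p) {U : Set X} {a b : Xt}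
    (h : JoinedIn (p ⁻¹' U) a b) : JoinedIn U (p a) (p b) := by
  obtain ⟨β, hβ⟩ := h
  exact ⟨β.map hp, fun t => hβ t⟩

end Aux

/-- Let `X` be a second-countable `T₁` space whose set of points at which it
fails to be semi-locally simply connected is at most countable, and let `p : X̃ → X` be a
generalized universal covering (in the sense of Fischer–Zastrow: `X̃` is simply connected and
locally path-connected, `p` is a continuous surjection with unique lifting of maps from
path-connected, locally path-connected spaces with trivial image of `π₁`).  If `Γ` is the
deck transformation group (acting over `p`, freely and transitively on each fibre), then the
action of `Γ` on `X̃` admits a Borel-measurable fundamental domain: a Borel set `F ⊆ X̃`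
meeting each `Γ`-orbit in exactly one point. -/
theorem exists_borel_fundamental_domain
    (X : Type) [TopologicalSpace X] [SecondCountableTopology X] [T1Space X]
    (hN : {x : X | ¬ SemiLocallySimplyConnectedAt X x}.Countable)
    (Xt : Type) [TopologicalSpace Xt] [MeasurableSpace Xt] [BorelSpace Xt]
    [SimplyConnectedSpace Xt] [LocallyPathConnectedSpace Xt]
    (p : Xt → X) (hp : Continuous p) (hsurj : Function.Surjective p)
    (hlift : ∀ (Y : Type) [TopologicalSpace Y] [PathConnectedSpace Y]
      [LocallyPathConnectedSpace Y] (y : Y) (f : Y → X) (hf : Continuous f),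
      (∀ γ : Path y y, (γ.map hf).Homotopic (Path.refl (f y))) →
      ∀ xt : Xt, p xt = f y →
        ∃! g : Y → Xt, Continuous g ∧ g y = xt ∧ p ∘ g = f)
    (Γ : Type) [Group Γ] [MulAction Γ Xt]
    (hdeck : ∀ (γ : Γ) (x : Xt), p (γ • x) = p x)
    (hfib : ∀ x y : Xt, p x = p y → ∃! γ : Γ, γ • x = y) :
    ∃ F : Set Xt, MeasurableSet F ∧ ∀ x : Xt, ∃! γ : Γ, γ • x ∈ F := by
  classical
  rcases isEmpty_or_nonempty X with hXe | hXne
  · exact ⟨∅, MeasurableSet.empty, fun x => (hXe.false (p x)).elim⟩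
  have hlift' : GenCovLift p := hlift
  choose s hs using hsurj
  haveI hT1 : T1Space Xt := cov_t1 hp hlift'
  haveI : MeasurableSingletonClass Xt := ⟨fun a => isClosed_singleton.measurableSet⟩
  obtain ⟨bas, hbc, -, hbasis⟩ := TopologicalSpace.exists_countable_basis X
  set e : ℕ → Set X := Set.enumerateCountable hbc ∅ with he
  have heopen : ∀ n, IsOpen (e n) := by
    intro n
    have hmem : e n ∈ insert ∅ bas := Set.range_enumerateCountable_subset hbc ∅ ⟨n, rfl⟩
    rcases Set.mem_insert_iff.mp hmem with h | h
    · rw [h]; exact isOpen_empty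
    · exact hbasis.isOpen h
  set A : ℕ → Set X := fun n =>
    {z | z ∈ e n ∧ ∀ γ : Path z z, Set.range ⇑γ ⊆ e n → γ.Homotopic (Path.refl z)} with hA
  have hAcov : ∀ z, SemiLocallySimplyConnectedAt X z → ∃ n, z ∈ A n := by
    rintro z ⟨U, hU, hkills⟩
    obtain ⟨V, hVbas, hzV, hVU⟩ := hbasis.mem_nhds_iff.mp hU
    obtain ⟨n, hn⟩ := Set.subset_range_enumerate hbc ∅ hVbas
    refine ⟨n, ?_, fun γ hγ => hkills γ ?_⟩
    · show z ∈ e n; rw [he, hn]; exact hzV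
    · rw [he, hn] at hγ
      exact hγ.trans hVU
  have hAsat : ∀ n z z', z ∈ A n → JoinedIn (e n) z z' → z' ∈ A n := by
    intro n z z' hz hj
    exact ⟨hj.target_mem, kills_of_joined hz.2 hj⟩
  set O : ℕ → Set Xt := fun n => p ⁻¹' (A n) with hO
  have hOopen : ∀ n, IsOpen (O n) := by
    intro n
    rw [isOpen_iff_forall_mem_open]
    intro a ha
    have ha' : p a ∈ A n := ha
    refine ⟨pathComponentIn (p ⁻¹' (e n)) a, ?_,
      ((heopen n).preimage hp).pathComponentIn a, mem_pathComponentIn_self ha'.1⟩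
    intro b hb
    have hj : JoinedIn (p ⁻¹' (e n)) a b := hb
    exact hAsat n (p a) (p b) ha' (joined_proj hp hj)
  have hrep : ∀ S : Set X, ∃ x, S.Nonempty → x ∈ S := fun S => by
    rcases S.eq_empty_or_nonempty with h | h
    · exact ⟨hXne.some, fun hne => absurd h hne.ne_empty⟩
    · exact ⟨h.some, fun _ => h.some_mem⟩
  choose h0 hh0 using hrep
  set r : ℕ → X → X := fun n z => h0 (pathComponentIn (e n) z) with hr
  have hrmem : ∀ n z, z ∈ e n → JoinedIn (e n) z (r n z) := by
    intro n z hz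
    exact hh0 _ ⟨z, mem_pathComponentIn_self hz⟩
  have hrcongr : ∀ n z z', JoinedIn (e n) z z' → r n z' = r n z := by
    intro n z z' hj
    have hmem : z' ∈ pathComponentIn (e n) z := hj
    have : pathComponentIn (e n) z' = pathComponentIn (e n) z := pathComponentIn_congr hmem
    show h0 (pathComponentIn (e n) z') = h0 (pathComponentIn (e n) z)
    rw [this]
  set G : ℕ → Set Xt := fun n =>
    ⋃ z ∈ A n, pathComponentIn (p ⁻¹' (e n)) (s (r n z)) with hG
  have hGopen : ∀ n, IsOpen (G n) := fun n =>
    isOpen_iUnion fun z => isOpen_iUnion fun _ => ((heopen n).preimage hp).pathComponentIn _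
  have hGsub : ∀ n, G n ⊆ O n := by
    intro n x hx
    obtain ⟨z, hz, hxz⟩ := Set.mem_iUnion₂.mp hx
    have hxz' : JoinedIn (p ⁻¹' (e n)) (s (r n z)) x := hxz
    have hj : JoinedIn (e n) (p (s (r n z))) (p x) := joined_proj hp hxz'
    rw [hs] at hj
    have hzr : JoinedIn (e n) z (r n z) := hrmem n z hz.1
    exact hAsat n z (p x) hz (hzr.trans hj)
  have hGmem : ∀ n z, z ∈ A n → ∃ x, x ∈ G n ∧ p x = z := by
    intro n z hz
    have hzr := hrmem n z hz.1
    obtain ⟨b, hbz, β, hβ⟩ := path_lift hlift' hzr.symm.somePath (s (r n z)) (hs (r n z))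
    refine ⟨b, ?_, hbz⟩
    refine Set.mem_iUnion₂.mpr ⟨z, hz, (⟨β, fun t => ?_⟩ : JoinedIn _ _ _)⟩
    show p (β t) ∈ e n
    rw [hβ t]
    exact hzr.symm.somePath_mem t
  have hGuniq : ∀ n x y, p x ∈ A n → x ∈ G n → y ∈ G n → p y = p x → x = y := by
    intro n x y hz hx hy hpy
    obtain ⟨z₁, hz₁, hx1⟩ := Set.mem_iUnion₂.mp hx
    obtain ⟨z₂, hz₂, hy2⟩ := Set.mem_iUnion₂.mp hy
    have hx1' : JoinedIn (p ⁻¹' (e n)) (s (r n z₁)) x := hx1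
    have hy2' : JoinedIn (p ⁻¹' (e n)) (s (r n z₂)) y := hy2
    have hjx : JoinedIn (e n) (r n z₁) (p x) := by
      have := joined_proj hp hx1'; rwa [hs] at this
    have hjy : JoinedIn (e n) (r n z₂) (p y) := by
      have := joined_proj hp hy2'; rwa [hs] at this
    have hr1 : r n (p x) = r n z₁ := by
      have hj1 : JoinedIn (e n) z₁ (p x) := (hrmem n z₁ hz₁.1).trans hjx
      exact hrcongr n z₁ (p x) hj1
    have hr2 : r n (p x) = r n z₂ := by
      have hj2 : JoinedIn (e n) z₂ (p y) := (hrmem n z₂ hz₂.1).trans hjy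
      have := hrcongr n z₂ (p y) hj2
      rw [← this]
      show h0 (pathComponentIn (e n) (p x)) = h0 (pathComponentIn (e n) (p y))
      rw [hpy]
    have hxy : JoinedIn (p ⁻¹' (e n)) x y := by
      rw [← hr1] at hx1'
      rw [← hr2] at hy2'
      exact hx1'.symm.trans hy2'
    exact (key_inj hp hlift' hz.2 hpy hxy).symm
  set Abig : Set X := {z | ∃ n, z ∈ A n} with hAbig
  set C : Set Xt := s '' {z | z ∉ Abig} with hC
  have hCc : C.Countable := by
    refine Set.Countable.image ?_ s
    refine hN.mono ?_
    intro z hz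
    exact fun hsl => hz (hAcov z hsl)
  set F : Set Xt := C ∪ ⋃ n, (G n \ ⋃ k, ⋃ _ : k < n, O k) with hF
  have hFm : MeasurableSet F := by
    refine hCc.measurableSet.union (MeasurableSet.iUnion fun n => ?_)
    exact (hGopen n).measurableSet.diff
      (isOpen_iUnion fun k => isOpen_iUnion fun _ => hOopen k).measurableSet
  have main : ∀ z : X, ∃! x, x ∈ F ∧ p x = z := by
    intro z
    by_cases hzA : z ∈ Abig
    · set n := Nat.find hzA with hn
      have hzn : z ∈ A n := Nat.find_spec hzA
      obtain ⟨x, hxG, hxp⟩ := hGmem n z hzn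
      have hxnot : x ∉ ⋃ k, ⋃ _ : k < n, O k := by
        intro hmem
        obtain ⟨k, hk, hkO⟩ := by
          simpa using hmem
        exact Nat.find_min hzA hk (by rw [← hxp]; exact hkO)
      refine ⟨x, ⟨Or.inr (Set.mem_iUnion.mpr ⟨n, hxG, hxnot⟩), hxp⟩, ?_⟩
      rintro y ⟨hyF, hyp⟩
      rcases hyF with hyC | hyG
      · obtain ⟨z', hz', hz'y⟩ := hyC
        exfalso
        apply hz'
        have : z' = z := by rw [← hyp, ← hz'y, hs]
        rw [this]
        exact hzA
      · obtain ⟨m, hym⟩ := Set.mem_iUnion.mp hyG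
        obtain ⟨hymG, hymnot⟩ := hym
        have hzm : z ∈ A m := by rw [← hyp]; exact hGsub m hymG
        have hnm : n ≤ m := Nat.find_min' hzA hzm
        rcases lt_or_eq_of_le hnm with hlt | heq
        · exfalso
          apply hymnot
          refine Set.mem_iUnion.mpr ⟨n, Set.mem_iUnion.mpr ⟨hlt, ?_⟩⟩
          show p y ∈ A n
          rw [hyp]; exact hzn
        · subst heq
          exact hGuniq n y x (by rw [hyp]; exact hzn) hymG hxG (by rw [hxp, hyp])
    · refine ⟨s z, ⟨Or.inl ⟨z, hzA, rfl⟩, hs z⟩, ?_⟩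
      rintro y ⟨hyF, hyp⟩
      rcases hyF with hyC | hyG
      · obtain ⟨z', _, hz'y⟩ := hyC
        have : z' = z := by rw [← hyp, ← hz'y, hs]
        rw [← hz'y, this]
      · exfalso
        obtain ⟨m, hym⟩ := Set.mem_iUnion.mp hyG
        exact hzA ⟨m, by rw [← hyp]; exact hGsub m hym.1⟩
  refine ⟨F, hFm, fun x => ?_⟩
  obtain ⟨w, ⟨hwF, hwp⟩, hwu⟩ := main (p x)
  obtain ⟨γ, hγ, hγu⟩ := hfib x w hwp.symm
  refine ⟨γ, by show γ • x ∈ F; rw [hγ]; exact hwF, ?_⟩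
  intro γ' hγ'
  exact hγu γ' (hwu (γ' • x) ⟨hγ', hdeck γ' x⟩)
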